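/- If a closed convex polyhedron Q = {(x,s) : Ax + s = b, s^{<f} = 0, s^f ≥ 0} is such that for every inequality index i (with f_i ≤ d_i) there exists a point of Q with s_i^{f_i} > 0, then the relative interior of Q is exactly {(x,s) : Ax + s = b, s^{<f} = 0, s^f > 0}. -/
import Mathlib


/-- The space of points `(x, s)` of a lex-polyhedron in standard form, with
slack blocks `s i : Fin (d i) → ℝ`. -/
abbrev Pt (m N : ℕ) (d : Fin m → ℕ) : Type :=
  (Fin N → ℝ) × ((i : Fin m) → Fin (d i) → ℝ)

/-- The equality constraints `A x + s = b`. -/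
def satEq (m N : ℕ) (d : Fin m → ℕ)
    (A : (i : Fin m) → Fin (d i) → Fin N → ℝ)
    (b : (i : Fin m) → Fin (d i) → ℝ) (p : Pt m N d) : Prop :=
  ∀ i j, (∑ k, A i j k * p.1 k) + p.2 i j = b i j

/-- Lexicographic nonnegativity: `v = 0` or the first nonzero entry of `v` is
positive. -/
def lexNonneg (n : ℕ) (v : Fin n → ℝ) : Prop :=
  v = 0 ∨ ∃ j, (∀ k, k < j → v k = 0) ∧ 0 < v j

/-- The lex-polyhedron `P^lex` in standard form. -/
def Plex (m N : ℕ) (d : Fin m → ℕ)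
    (A : (i : Fin m) → Fin (d i) → Fin N → ℝ)
    (b : (i : Fin m) → Fin (d i) → ℝ) : Set (Pt m N d) :=
  {p | satEq m N d A b p ∧ ∀ i, lexNonneg (d i) (p.2 i)}

/-- A front (0-based): `f i ∈ {0, …, d i}` for each `i`. -/
def IsFront (m : ℕ) (d : Fin m → ℕ) (f : Fin m → ℕ) : Prop :=
  ∀ i, f i ≤ d i

/-- The closed convex polyhedron `P^f` associated with a front `f`: the first
`f i` slacks of block `i` vanish, and the next one (if any) is nonnegative. -/
def Pfront (m N : ℕ) (d : Fin m → ℕ)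
    (A : (i : Fin m) → Fin (d i) → Fin N → ℝ)
    (b : (i : Fin m) → Fin (d i) → ℝ) (f : Fin m → ℕ) : Set (Pt m N d) :=
  {p | satEq m N d A b p ∧ (∀ i, ∀ j : Fin (d i), (j : ℕ) < f i → p.2 i j = 0) ∧
    (∀ i, ∀ h : f i < d i, 0 ≤ p.2 i ⟨f i, h⟩)}

/-- The defining property of the max-front `f⋆`. -/
def IsMaxFront (m N : ℕ) (d : Fin m → ℕ)
    (A : (i : Fin m) → Fin (d i) → Fin N → ℝ)
    (b : (i : Fin m) → Fin (d i) → ℝ) (fstar : Fin m → ℕ) : Prop :=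
  ∀ i, IsGreatest
    {j | j ≤ d i ∧ ∀ p ∈ Plex m N d A b, ∀ k : Fin (d i), (k : ℕ) < j → p.2 i k = 0}
    (fstar i)

noncomputable def Lsub (m N : ℕ) (d : Fin m → ℕ)
    (A : (i : Fin m) → Fin (d i) → Fin N → ℝ)
    (b : (i : Fin m) → Fin (d i) → ℝ) (f : Fin m → ℕ) : AffineSubspace ℝ (Pt m N d) where
  carrier := {p | satEq m N d A b p ∧ ∀ i, ∀ j : Fin (d i), (j:ℕ) < f i → p.2 i j = 0}
  smul_vsub_vadd_mem' := by
    intro c p₁ p₂ p₃ h1 h2 h3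
    constructor
    · intro i j
      have e1 := h1.1 i j; have e2 := h2.1 i j; have e3 := h3.1 i j
      simp only [vsub_eq_sub, vadd_eq_add, Prod.fst_sub, Prod.fst_add, Prod.smul_fst,
        Prod.snd_sub, Prod.snd_add, Prod.smul_snd, Pi.add_apply, Pi.sub_apply, Pi.smul_apply,
        smul_eq_mul]
      have key : (∑ k, A i j k * (c * (p₁.1 k - p₂.1 k) + p₃.1 k))
          = c * ((∑ k, A i j k * p₁.1 k) - (∑ k, A i j k * p₂.1 k)) + ∑ k, A i j k * p₃.1 k := by
        rw [mul_sub, Finset.mul_sum, Finset.mul_sum, ← Finset.sum_sub_distrib,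
          ← Finset.sum_add_distrib]
        exact Finset.sum_congr rfl fun k _ => by ring
      rw [key]
      have h4 : (∑ k, A i j k * p₁.1 k) - (∑ k, A i j k * p₂.1 k)
          = p₂.2 i j - p₁.2 i j := by linarith
      rw [h4]
      have h5 : c * (p₂.2 i j - p₁.2 i j) + c * (p₁.2 i j - p₂.2 i j) = 0 := by ring
      linarith
    · intro i j hj
      have e1 := h1.2 i j hj; have e2 := h2.2 i j hj; have e3 := h3.2 i j hj
      simp only [vsub_eq_sub, vadd_eq_add, Prod.snd_sub, Prod.snd_add, Prod.smul_snd,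
        Pi.add_apply, Pi.sub_apply, Pi.smul_apply, smul_eq_mul, e1, e2, e3]
      ring

/-- If no inequality `s_i^{f i} ≥ 0` is implicitly an equality on `Q = P^f`,
then the relative interior of `Q` is obtained by turning these inequalities
into strict ones. -/
theorem relint_Pfront (m N : ℕ) (d : Fin m → ℕ) (hd : ∀ i, 1 ≤ d i)
    (A : (i : Fin m) → Fin (d i) → Fin N → ℝ)
    (b : (i : Fin m) → Fin (d i) → ℝ) (f : Fin m → ℕ) (hf : IsFront m d f)
    (hne : ∀ i, ∀ h : f i < d i,
      ∃ p ∈ Pfront m N d A b f, 0 < p.2 i ⟨f i, h⟩) :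
    intrinsicInterior ℝ (Pfront m N d A b f) =
      {p | satEq m N d A b p ∧
        (∀ i, ∀ j : Fin (d i), (j : ℕ) < f i → p.2 i j = 0) ∧
        (∀ i, ∀ h : f i < d i, 0 < p.2 i ⟨f i, h⟩)} := by
  set S := Pfront m N d A b f with hSdef
  have hSL : S ⊆ (Lsub m N d A b f : Set (Pt m N d)) := fun p hp => ⟨hp.1, hp.2.1⟩
  have hspan : affineSpan ℝ S ≤ Lsub m N d A b f := affineSpan_le.mpr hSL
  have hU : IsOpen {q : Pt m N d | ∀ i, ∀ h : f i < d i, 0 < q.2 i ⟨f i, h⟩} := by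
    have heq : {q : Pt m N d | ∀ i, ∀ h : f i < d i, 0 < q.2 i ⟨f i, h⟩}
        = ⋂ i, {q : Pt m N d | ∀ h : f i < d i, 0 < q.2 i ⟨f i, h⟩} := by
      ext q; simp [Set.mem_iInter, Set.mem_setOf_eq]
    rw [heq]
    refine isOpen_iInter_of_finite fun i => ?_
    by_cases h : f i < d i
    · have heq2 : {q : Pt m N d | ∀ h' : f i < d i, 0 < q.2 i ⟨f i, h'⟩}
          = (fun q : Pt m N d => q.2 i ⟨f i, h⟩) ⁻¹' Set.Ioi 0 := by
        ext q
        exact ⟨fun hq => hq h, fun hq h' => hq⟩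
      rw [heq2]
      exact IsOpen.preimage
        ((continuous_apply _).comp ((continuous_apply i).comp continuous_snd)) isOpen_Ioi
    · have heq2 : {q : Pt m N d | ∀ h' : f i < d i, 0 < q.2 i ⟨f i, h'⟩} = Set.univ := by
        ext q; simp only [Set.mem_setOf_eq, Set.mem_univ, iff_true]
        intro h'; exact absurd h' h
      rw [heq2]; exact isOpen_univ
  apply Set.Subset.antisymm
  · -- intrinsicInterior ⊆ strict set
    intro p hp
    have hpS : p ∈ S := intrinsicInterior_subset hp
    refine ⟨hpS.1, hpS.2.1, ?_⟩
    intro i h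
    by_contra hc
    push_neg at hc
    have hps : p.2 i ⟨f i, h⟩ = 0 := le_antisymm hc (hpS.2.2 i h)
    obtain ⟨q, hqS, hq⟩ := hne i h
    obtain ⟨y, hy, hyc⟩ := mem_intrinsicInterior.mp hp
    have hpA : p ∈ affineSpan ℝ S := subset_affineSpan ℝ _ hpS
    have hqA : q ∈ affineSpan ℝ S := subset_affineSpan ℝ _ hqS
    have hmem : ∀ t : ℝ, AffineMap.lineMap q p (1 + t) ∈ affineSpan ℝ S := fun t =>
      AffineMap.lineMap_mem _ hqA hpA
    set γ : ℝ → affineSpan ℝ S := fun t => ⟨AffineMap.lineMap q p (1 + t), hmem t⟩ with hγ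
    have hγc : Continuous γ := by
      apply Continuous.subtype_mk
      simp only [AffineMap.lineMap_apply_module]
      fun_prop
    have hγ0 : γ 0 = y := by
      apply Subtype.ext
      simp only [hγ, add_zero, AffineMap.lineMap_apply_one, hyc]
    have hnh : γ ⁻¹' interior (((↑) : affineSpan ℝ S → Pt m N d) ⁻¹' S) ∈ nhds (0 : ℝ) := by
      apply hγc.continuousAt.preimage_mem_nhds
      exact isOpen_interior.mem_nhds (hγ0 ▸ hy)
    obtain ⟨ε, hε, hball⟩ := Metric.mem_nhds_iff.mp hnh
    have htpos : (0 : ℝ) < ε / 2 := by linarith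
    have htball : (ε / 2 : ℝ) ∈ Metric.ball (0 : ℝ) ε := by
      rw [Metric.mem_ball, Real.dist_eq, sub_zero, abs_of_pos htpos]; linarith
    have h1 : γ (ε / 2) ∈ (Subtype.val ⁻¹' S) := interior_subset (hball htball)
    have hmemS : AffineMap.lineMap q p (1 + ε / 2) ∈ S := h1
    have hineq := hmemS.2.2 i h
    simp only [AffineMap.lineMap_apply_module', vsub_eq_sub, vadd_eq_add, Prod.snd_sub,
      Prod.snd_add, Prod.smul_snd, Pi.add_apply, Pi.sub_apply, Pi.smul_apply, smul_eq_mul,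
      hps] at hineq
    nlinarith [mul_pos htpos hq]
  · -- strict set ⊆ intrinsicInterior
    intro p hp
    have hpS : p ∈ S := ⟨hp.1, hp.2.1, fun i h => (hp.2.2 i h).le⟩
    refine mem_intrinsicInterior.mpr ⟨⟨p, subset_affineSpan ℝ _ hpS⟩, ?_, rfl⟩
    have hsub : (((↑) : affineSpan ℝ S → Pt m N d) ⁻¹'
        {q : Pt m N d | ∀ i, ∀ h : f i < d i, 0 < q.2 i ⟨f i, h⟩}) ⊆ (↑) ⁻¹' S := by
      rintro ⟨r, hr⟩ hrU
      have hrL := hspan hr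
      exact ⟨hrL.1, hrL.2, fun i h => (hrU i h).le⟩
    exact interior_maximal hsub (hU.preimage continuous_subtype_val) hp.2.2
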